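/- arXiv:1508.00527 — 3 statements merged into one kernel-verified Lean document; each statement's English description precedes it below -/
import Mathlib

section
/- Every finite game admitting an exact potential function has at least one pure Nash equilibrium; in particular, any maximizer of the potential function over the (finite) set of action profiles is a pure Nash equilibrium. -/
/-- Every finite game with an exact potential has a pure Nash equilibrium;
any maximizer of the potential is a pure Nash equilibrium. -/
theorem stmt_2 (N : ℕ) (A : Fin N → Type*)
    [∀ n, Fintype (A n)] [∀ n, Nonempty (A n)]
    (u : ((n : Fin N) → A n) → Fin N → ℝ)
    (Φ : ((n : Fin N) → A n) → ℝ)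
    (hΦ : ∀ (n : Fin N) (a : (n : Fin N) → A n) (an bn : A n),
      u (Function.update a n an) n - u (Function.update a n bn) n =
        Φ (Function.update a n an) - Φ (Function.update a n bn)) :
    (∀ astar : (n : Fin N) → A n, (∀ a, Φ a ≤ Φ astar) →
      ∀ (n : Fin N) (b : A n), u (Function.update astar n b) n ≤ u astar n) ∧
    ∃ astar : (n : Fin N) → A n,
      ∀ (n : Fin N) (b : A n), u (Function.update astar n b) n ≤ u astar n := by
  have key : ∀ astar : (n : Fin N) → A n, (∀ a, Φ a ≤ Φ astar) →
      ∀ (n : Fin N) (b : A n), u (Function.update astar n b) n ≤ u astar n := by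
    intro astar hmax n b
    have h := hΦ n astar (astar n) b
    rw [Function.update_eq_self] at h
    have := hmax (Function.update astar n b)
    linarith
  refine ⟨key, ?_⟩
  obtain ⟨astar, hastar⟩ := Finite.exists_max Φ
  exact ⟨astar, key astar hastar⟩
end

section
/- In the game G2 with M < N (strictly fewer actions than players), every action profile in which every action in ℳ is chosen by at least two players is a pure Nash equilibrium. -/
/-- In game G2 with M < N, every profile in which each action is chosen by at
least two players is a pure Nash equilibrium. -/
theorem stmt_6 (N M : ℕ) (hMN : M < N) (β : ℝ) (hβ : 0 < β)
    (S : Fin N → Fin M → ℝ)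
    (w : (Fin N → Fin M) → Fin N → ℝ)
    (hw : ∀ a n, w a n =
      if ∃ n', n' ≠ n ∧ a n' = a n then -2
      else if β ≤ S n (a n) then 1 else -1) :
    ∀ a : Fin N → Fin M,
      (∀ m : Fin M, 2 ≤ (Finset.univ.filter (fun n => a n = m)).card) →
      ∀ (n : Fin N) (b : Fin M), w (Function.update a n b) n ≤ w a n := by
  intro a ha n b
  have key : ∀ m : Fin M, ∃ n', n' ≠ n ∧ a n' = m := by
    intro m
    by_contra h
    push_neg at h
    have hsub : (Finset.univ.filter (fun k => a k = m)) ⊆ {n} := by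
      intro k hk
      simp only [Finset.mem_filter] at hk
      rcases eq_or_ne k n with hkn | hkn
      · simp [hkn]
      · exact absurd hk.2 (h k hkn)
    have h1 := Finset.card_le_card hsub
    have h2 := ha m
    simp at h1
    omega
  have h1 : w a n = -2 := by
    rw [hw]
    exact if_pos (key (a n))
  have h2 : w (Function.update a n b) n = -2 := by
    rw [hw]
    obtain ⟨n', hne, hb⟩ := key b
    refine if_pos ⟨n', hne, ?_⟩
    simp [Function.update_of_ne hne, hb]
  rw [h1, h2]
end

section
/- In game G, every pure Nash equilibrium induces a feasible solution to the user-BS association optimization problem: the set of pairs {(a*_n, n) : a*_n ≠ s} defines a partial injective assignment of users to base stations in which every assigned pair meets the SINR threshold β. -/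
/-- In game G, every pure Nash equilibrium induces a feasible solution of the
user-BS association problem: a partial injective assignment of users to base
stations in which every assigned pair meets the SINR threshold β. -/
theorem stmt_11 (N M : ℕ) (β : ℝ)
    (SINR : (Fin N → Option (Fin M)) → Fin N → Fin M → ℝ)
    (u : (Fin N → Option (Fin M)) → Fin N → ℝ)
    (hu : ∀ a n, u a n = (a n).elim 0 (fun m =>
      if β ≤ SINR a n m ∧ ∀ n', n' ≠ n → a n' ≠ some m then 1 else -1)) :
    ∀ astar : Fin N → Option (Fin M),
      (∀ (n : Fin N) (b : Option (Fin M)), u (Function.update astar n b) n ≤ u astar n) →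
      (∀ n n' : Fin N, astar n ≠ none → astar n = astar n' → n = n') ∧
      (∀ (n : Fin N) (m : Fin M), astar n = some m → β ≤ SINR astar n m) := by
  intro astar hne
  have key : ∀ (n : Fin N) (m : Fin M), astar n = some m →
      β ≤ SINR astar n m ∧ ∀ n', n' ≠ n → astar n' ≠ some m := by
    intro n m hm
    have h0 : u (Function.update astar n none) n = 0 := by
      rw [hu]; simp
    have h1 : (0 : ℝ) ≤ u astar n := h0 ▸ hne n none
    rw [hu, hm] at h1
    simp only [Option.elim] at h1
    by_contra hc
    rw [if_neg hc] at h1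
    linarith
  constructor
  · intro n n' hn heq
    cases h : astar n with
    | none => exact absurd h hn
    | some m =>
      by_contra hnn
      exact (key n m h).2 n' (fun e => hnn e.symm) (heq ▸ h)
  · intro n m hm
    exact (key n m hm).1
end
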